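/- Let m ≥ 2 be an integer, c a real constant, and w : (0,∞) → ℝ a differentiable function. Define u : (0,∞) → ℝ by u(r) = w(r)/√(1 + w(r)²). Then w satisfies w'(r) = c·(1 + w(r)²)^(3/2) − (m−1)·coth(r)·w(r)·(1 + w(r)²) for all r > 0 if and only if u is differentiable and satisfies u'(r) = c − (m−1)·coth(r)·u(r) for all r > 0. -/

import Mathlib

lemma rpow32 (a : ℝ) (ha : 0 < a) : a ^ ((3:ℝ)/2) = Real.sqrt a * a := by
  rw [show (3:ℝ)/2 = 1/2 + 1 by ring, Real.rpow_add ha, Real.rpow_one,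
    ← Real.sqrt_eq_rpow]

lemma key (w : ℝ → ℝ) (r : ℝ) (h : DifferentiableAt ℝ w r) :
    HasDerivAt (fun x => w x / Real.sqrt (1 + w x ^ 2))
      (deriv w r / (1 + w r ^ 2) ^ ((3:ℝ)/2)) r := by
  have ha : (0:ℝ) < 1 + w r ^ 2 := by positivity
  have hs : Real.sqrt (1 + w r ^ 2) ≠ 0 := by positivity
  have h1 : HasDerivAt (fun x => 1 + w x ^ 2)
      ((2:ℕ) * w r ^ 1 * deriv w r) r := (h.hasDerivAt.pow 2).const_add 1
  have h2 : HasDerivAt (fun x => Real.sqrt (1 + w x ^ 2))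
      (1 / (2 * Real.sqrt (1 + w r ^ 2)) * ((2:ℕ) * w r ^ 1 * deriv w r)) r :=
    (Real.hasDerivAt_sqrt ha.ne').comp r h1
  have h3 := h.hasDerivAt.div h2 hs
  refine h3.congr_deriv ?_
  symm
  rw [rpow32 _ ha]
  have hsq : Real.sqrt (1 + w r ^ 2) ^ 2 = 1 + w r ^ 2 := Real.sq_sqrt ha.le
  set s := Real.sqrt (1 + w r ^ 2) with hsdef
  rw [← hsq]
  field_simp
  linear_combination (-(2:ℝ) * deriv w r) * hsq

theorem stmt_6 (m : ℕ) (hm : 2 ≤ m) (c : ℝ) (w : ℝ → ℝ)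
    (hw : ∀ r : ℝ, 0 < r → DifferentiableAt ℝ w r)
    (u : ℝ → ℝ) (hu : ∀ r : ℝ, u r = w r / Real.sqrt (1 + w r ^ 2)) :
    (∀ r : ℝ, 0 < r →
        deriv w r = c * (1 + w r ^ 2) ^ ((3:ℝ)/2)
          - ((m : ℝ) - 1) * (Real.cosh r / Real.sinh r) * w r * (1 + w r ^ 2)) ↔
      (∀ r : ℝ, 0 < r →
        HasDerivAt u (c - ((m : ℝ) - 1) * (Real.cosh r / Real.sinh r) * u r) r) := by
  have hufun : u = fun x => w x / Real.sqrt (1 + w x ^ 2) := funext hu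
  constructor
  · intro H r hr
    have ha : (0:ℝ) < 1 + w r ^ 2 := by positivity
    have hs : Real.sqrt (1 + w r ^ 2) ≠ 0 := by positivity
    have hd := key w r (hw r hr)
    rw [← hufun] at hd
    convert hd using 1
    rw [H r hr, hu r, rpow32 _ ha]
    field_simp
  · intro H r hr
    have ha : (0:ℝ) < 1 + w r ^ 2 := by positivity
    have hs : Real.sqrt (1 + w r ^ 2) ≠ 0 := by positivity
    have hd := key w r (hw r hr)
    rw [← hufun] at hd
    have heq := (H r hr).unique hd
    have hD : (1 + w r ^ 2) ^ ((3:ℝ)/2) ≠ 0 := by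
      rw [rpow32 _ ha]; positivity
    rw [eq_div_iff hD] at heq
    rw [← heq, hu r, rpow32 _ ha]
    field_simp
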